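/- Let y and ŷ be real-valued continuously differentiable functions on [0,∞) × [0,1] satisfying the transport equations ∂_t y(t,x) + ∂_x y(t,x) = 0 and ∂_t ŷ(t,x) + ∂_x ŷ(t,x) = 0 for all (t,x) ∈ [0,∞) × [0,1], together with the boundary conditions y(t,0) = y(t,1) − ŷ(t,1) and ŷ(t,0) = y(t,1) − ŷ(t,1) for all t ≥ 0. Then y(t,x) = 0 for all t ≥ 2 and all x ∈ [0,1] (finite-time stability of the inviscid closed-loop system). -/

import Mathlib

/-- The space-time domain `[0,∞) × [0,1]`. -/
def dom : Set (ℝ × ℝ) := Set.Ici (0 : ℝ) ×ˢ Set.Icc (0 : ℝ) 1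

lemma char_lemma (f : ℝ × ℝ → ℝ) (hf : ContDiffOn ℝ 1 f dom)
    (hpde : ∀ p ∈ dom,
      fderivWithin ℝ f dom p (1, 0) + fderivWithin ℝ f dom p (0, 1) = 0) :
    ∀ t0 : ℝ, 0 ≤ t0 → ∀ s ∈ Set.Icc (0 : ℝ) 1, f (t0 + s, s) = f (t0, 0) := by
  intro t0 ht0 s hs
  set γ : ℝ → ℝ × ℝ := fun s => (t0 + s, s) with hγdef
  have hmaps : Set.MapsTo γ (Set.Icc (0 : ℝ) 1) dom := by
    intro u hu
    exact ⟨by simpa using add_nonneg ht0 hu.1, hu⟩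
  have hd : DifferentiableOn ℝ f dom := hf.differentiableOn one_ne_zero
  set g : ℝ → ℝ := fun u => f (γ u) with hgdef
  have hderiv : ∀ u ∈ Set.Icc (0 : ℝ) 1,
      HasDerivWithinAt g 0 (Set.Icc (0 : ℝ) 1) u := by
    intro u hu
    have hγd : HasDerivWithinAt γ ((1 : ℝ), (1 : ℝ)) (Set.Icc (0 : ℝ) 1) u := by
      have h1 : HasDerivWithinAt (fun v : ℝ => t0 + v) 1 (Set.Icc (0 : ℝ) 1) u :=
        (hasDerivWithinAt_id u _).const_add t0
      have h2 : HasDerivWithinAt (fun v : ℝ => v) 1 (Set.Icc (0 : ℝ) 1) u :=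
        hasDerivWithinAt_id u _
      exact h1.prodMk h2
    have hfd : HasFDerivWithinAt f (fderivWithin ℝ f dom (γ u)) dom (γ u) :=
      (hd (γ u) (hmaps hu)).hasFDerivWithinAt
    have hcomp := hfd.comp_hasDerivWithinAt u hγd hmaps
    have hzero : fderivWithin ℝ f dom (γ u) ((1 : ℝ), (1 : ℝ)) = 0 := by
      have h11 : ((1 : ℝ), (1 : ℝ)) = ((1 : ℝ), (0 : ℝ)) + ((0 : ℝ), (1 : ℝ)) := by
        simp
      rw [h11, (fderivWithin ℝ f dom (γ u)).map_add]
      exact hpde (γ u) (hmaps hu)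
    rwa [hzero] at hcomp
  have hdiff : DifferentiableOn ℝ g (Set.Icc (0 : ℝ) 1) :=
    fun u hu => (hderiv u hu).differentiableWithinAt
  have hdz : ∀ u ∈ Set.Ico (0 : ℝ) 1, derivWithin g (Set.Icc (0 : ℝ) 1) u = 0 := by
    intro u hu
    exact (hderiv u (Set.Ico_subset_Icc_self hu)).derivWithin
      ((uniqueDiffOn_Icc zero_lt_one) u (Set.Ico_subset_Icc_self hu))
  have := constant_of_derivWithin_zero hdiff hdz s hs
  simpa [hgdef, hγdef] using this

theorem stmt_19 (y yhat : ℝ × ℝ → ℝ)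
    (hy : ContDiffOn ℝ 1 y dom)
    (hyhat : ContDiffOn ℝ 1 yhat dom)
    (hpde_y : ∀ p ∈ dom,
      fderivWithin ℝ y dom p (1, 0) + fderivWithin ℝ y dom p (0, 1) = 0)
    (hpde_yhat : ∀ p ∈ dom,
      fderivWithin ℝ yhat dom p (1, 0) + fderivWithin ℝ yhat dom p (0, 1) = 0)
    (hbc_y : ∀ t : ℝ, 0 ≤ t → y (t, 0) = y (t, 1) - yhat (t, 1))
    (hbc_yhat : ∀ t : ℝ, 0 ≤ t → yhat (t, 0) = y (t, 1) - yhat (t, 1)) :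
    ∀ t : ℝ, 2 ≤ t → ∀ x ∈ Set.Icc (0 : ℝ) 1, y (t, x) = 0 := by
  have hcy := char_lemma y hy hpde_y
  have hcyhat := char_lemma yhat hyhat hpde_yhat
  -- Step 1: for t ≥ 1, y (t,1) = yhat (t,1)
  have key : ∀ t : ℝ, 1 ≤ t → y (t, 1) = yhat (t, 1) := by
    intro t ht
    have ht1 : (0 : ℝ) ≤ t - 1 := by linarith
    have h1 : y (t, 1) = y (t - 1, 0) := by
      have := hcy (t - 1) ht1 1 ⟨zero_le_one, le_refl 1⟩
      simpa using this
    have h2 : yhat (t, 1) = yhat (t - 1, 0) := by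
      have := hcyhat (t - 1) ht1 1 ⟨zero_le_one, le_refl 1⟩
      simpa using this
    rw [h1, h2, hbc_y (t - 1) ht1, hbc_yhat (t - 1) ht1]
  intro t ht x hx
  have htx : (0 : ℝ) ≤ t - x := by linarith [hx.2]
  have h1 : y (t, x) = y (t - x, 0) := by
    have := hcy (t - x) htx x hx
    simpa using this
  have htx1 : (1 : ℝ) ≤ t - x := by linarith [hx.2]
  rw [h1, hbc_y (t - x) htx, key (t - x) htx1, sub_self]
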